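/- Let α, β > 0, let A ≥ 0, let 0 = Δ_0 < Δ_1 < ⋯ < Δ_{κ−1} be partition points, and let f_1, …, f_κ > 0; define the piecewise-constant function f by f(s) = f_k for s ∈ [Δ_{k−1}, Δ_k) when k < κ and f(s) = f_κ for s ≥ Δ_{κ−1}. Then the improper integral ∫_A^∞ α f(s) e^{−β f(s)(s−A)} ds converges and equals (α/β) [ Σ_{k=1}^{κ−1} ( e^{−β f_k (Δ_{k−1}−A)^+} − e^{−β f_k (Δ_k−A)^+} ) + e^{−β f_κ (Δ_{κ−1}−A)^+} ], where x^+ = max(x, 0). -/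

import Mathlib

open MeasureTheory Filter
open scoped Topology

lemma tail_closed_form (α β A c M : ℝ) (hβ : 0 < β) (hc : 0 < c) :
    IntegrableOn (fun s => α * c * Real.exp (-β * c * (s - A))) (Set.Ioi M)
    ∧ (∫ s in Set.Ioi M, α * c * Real.exp (-β * c * (s - A)))
      = α / β * Real.exp (-β * c * (M - A)) := by
  have hbc : 0 < β * c := mul_pos hβ hc
  have hint : IntegrableOn (fun s => α * c * Real.exp (-β * c * (s - A))) (Set.Ioi M) := by
    have h1 : IntegrableOn (fun x : ℝ => Real.exp (-(β * c) * x)) (Set.Ioi M) :=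
      exp_neg_integrableOn_Ioi M hbc
    have h2 : IntegrableOn (fun x : ℝ => α * c * Real.exp (β * c * A) * Real.exp (-(β * c) * x))
        (Set.Ioi M) := h1.const_mul (α * c * Real.exp (β * c * A))
    refine h2.congr_fun (fun x _ => ?_) measurableSet_Ioi
    beta_reduce
    rw [mul_assoc, ← Real.exp_add]
    ring_nf
  refine ⟨hint, ?_⟩
  have hderiv : ∀ x ∈ Set.Ici M,
      HasDerivAt (fun s => -(α / β) * Real.exp (-β * c * (s - A)))
        (α * c * Real.exp (-β * c * (x - A))) x := by
    intro x _
    have h1 : HasDerivAt (fun s : ℝ => -β * c * (s - A)) (-β * c) x := by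
      simpa using ((hasDerivAt_id x).sub_const A).const_mul (-β * c)
    have h3 := (h1.exp).const_mul (-(α / β))
    refine h3.congr_deriv ?_
    field_simp
  have htend : Tendsto (fun s => -(α / β) * Real.exp (-β * c * (s - A))) atTop (𝓝 0) := by
    have h1 : Tendsto (fun s : ℝ => s - A) atTop atTop := tendsto_atTop_add_const_right _ (-A) tendsto_id
    have h2 : Tendsto (fun s : ℝ => -β * c * (s - A)) atTop atBot := by
      refine h1.const_mul_atTop_of_neg ?_
      nlinarith
    have h3 : Tendsto (fun s : ℝ => Real.exp (-β * c * (s - A))) atTop (𝓝 0) :=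
      Real.tendsto_exp_atBot.comp h2
    simpa using h3.const_mul (-(α / β))
  have := integral_Ioi_of_hasDerivAt_of_tendsto' hderiv hint htend
  rw [this, zero_sub, neg_mul, neg_neg]

lemma compensator_aux (α β A : ℝ) (hα : 0 < α) (hβ : 0 < β) (hA : 0 ≤ A) :
    ∀ κ : ℕ, 1 ≤ κ → ∀ Δ : ℕ → ℝ, Δ 0 = 0 →
    (∀ l, l + 1 < κ → Δ l < Δ (l + 1)) →
    ∀ fv : ℕ → ℝ, (∀ l, 1 ≤ l → l ≤ κ → 0 < fv l) →
    ∀ f : ℝ → ℝ,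
    (∀ l, 1 ≤ l → l < κ → ∀ s, Δ (l - 1) ≤ s → s < Δ l → f s = fv l) →
    (∀ s, Δ (κ - 1) ≤ s → f s = fv κ) →
    IntegrableOn (fun s => α * f s * Real.exp (-β * f s * (s - A))) (Set.Ioi A)
    ∧ (∫ s in Set.Ioi A, α * f s * Real.exp (-β * f s * (s - A)))
      = α / β * ((∑ l ∈ Finset.Icc 1 (κ - 1),
          (Real.exp (-β * fv l * max (Δ (l - 1) - A) 0) - Real.exp (-β * fv l * max (Δ l - A) 0)))
        + Real.exp (-β * fv κ * max (Δ (κ - 1) - A) 0)) := by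
  intro κ hκ
  induction κ, hκ using Nat.le_induction with
  | base =>
    intro Δ hΔ0 hΔmono fv hfv f hf1 hf2
    have hc : 0 < fv 1 := hfv 1 le_rfl le_rfl
    have heq : Set.EqOn (fun s => α * fv 1 * Real.exp (-β * fv 1 * (s - A)))
        (fun s => α * f s * Real.exp (-β * f s * (s - A))) (Set.Ioi A) := by
      intro s hs
      have : f s = fv 1 := hf2 s (by simp [hΔ0]; linarith [Set.mem_Ioi.mp hs])
      simp [this]
    obtain ⟨hint, hval⟩ := tail_closed_form α β A (fv 1) A hβ hc
    constructor
    · exact hint.congr_fun heq measurableSet_Ioi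
    · rw [← setIntegral_congr_fun measurableSet_Ioi heq, hval]
      have h0 : Finset.Icc 1 (1 - 1) = (∅ : Finset ℕ) := by decide
      simp only [h0, Finset.sum_empty, zero_add]
      congr 1
      rw [sub_self, show Δ (1 - 1) = Δ 0 from rfl, hΔ0, zero_sub,
        max_eq_right (by linarith : -A ≤ (0:ℝ))]
  | succ κ hκ IH =>
    intro Δ hΔ0 hΔmono fv hfv f hf1 hf2
    -- strict chain
    have hchain : ∀ m, m ≤ κ → ∀ l, l < m → Δ l < Δ m := by
      intro m
      induction m with
      | zero => omega
      | succ m ih =>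
        intro hm l hl
        have hstep : Δ m < Δ (m + 1) := hΔmono m (by omega)
        rcases Nat.lt_succ_iff_lt_or_eq.mp hl with h | h
        · exact (ih (by omega) l h).trans hstep
        · subst h; exact hstep
    set g : ℝ → ℝ := fun s => if s < Δ κ then f s else fv κ with hg
    have hg1 : ∀ l, 1 ≤ l → l < κ → ∀ s, Δ (l - 1) ≤ s → s < Δ l → g s = fv l := by
      intro l hl1 hl2 s hs1 hs2
      have hlt : s < Δ κ := lt_of_lt_of_le hs2 (le_of_lt (hchain κ le_rfl l hl2))
      simp only [hg, if_pos hlt]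
      exact hf1 l hl1 (by omega) s hs1 hs2
    have hg2 : ∀ s, Δ (κ - 1) ≤ s → g s = fv κ := by
      intro s hs
      by_cases h : s < Δ κ
      · simp only [hg, if_pos h]
        exact hf1 κ hκ (by omega) s hs h
      · simp only [hg, if_neg h]
    obtain ⟨hGint, hGval⟩ := IH Δ hΔ0 (fun l hl => hΔmono l (by omega)) fv
      (fun l h1 h2 => hfv l h1 (by omega)) g hg1 hg2
    set M : ℝ := max (Δ κ) A with hM
    have hAM : A ≤ M := le_max_right _ _
    have hΔM : Δ κ ≤ M := le_max_left _ _
    have hMA : M - A = max (Δ κ - A) 0 := by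
      rw [hM, ← max_sub_sub_right, sub_self]
    have hcκ : 0 < fv κ := hfv κ hκ (by omega)
    have hcκ1 : 0 < fv (κ + 1) := hfv (κ + 1) (by omega) le_rfl
    -- tail equalities
    have hfM : Set.EqOn (fun s => α * fv (κ + 1) * Real.exp (-β * fv (κ + 1) * (s - A)))
        (fun s => α * f s * Real.exp (-β * f s * (s - A))) (Set.Ioi M) := by
      intro s hs
      have h1 : Δ (κ + 1 - 1) ≤ s := by
        simp only [Nat.add_sub_cancel]
        exact le_of_lt (lt_of_le_of_lt hΔM (Set.mem_Ioi.mp hs))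
      have := hf2 s h1
      simp [this]
    have hgM : Set.EqOn (fun s => α * fv κ * Real.exp (-β * fv κ * (s - A)))
        (fun s => α * g s * Real.exp (-β * g s * (s - A))) (Set.Ioi M) := by
      intro s hs
      have h1 : ¬ s < Δ κ := not_lt.mpr (le_of_lt (lt_of_le_of_lt hΔM (Set.mem_Ioi.mp hs)))
      simp [hg, if_neg h1]
    obtain ⟨hFtail_int, hFtail_val⟩ := tail_closed_form α β A (fv (κ + 1)) M hβ hcκ1
    obtain ⟨hGtail_int, hGtail_val⟩ := tail_closed_form α β A (fv κ) M hβ hcκ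
    have hF_Ioi : IntegrableOn (fun s => α * f s * Real.exp (-β * f s * (s - A))) (Set.Ioi M) :=
      hFtail_int.congr_fun hfM measurableSet_Ioi
    have hG_Ioi : IntegrableOn (fun s => α * g s * Real.exp (-β * g s * (s - A))) (Set.Ioi M) :=
      hGint.mono (Set.Ioi_subset_Ioi hAM) le_rfl
    -- f = g on Ioo A M
    have hfgIoo : Set.EqOn (fun s => α * g s * Real.exp (-β * g s * (s - A)))
        (fun s => α * f s * Real.exp (-β * f s * (s - A))) (Set.Ioo A M) := by
      intro s hs
      obtain ⟨h1, h2⟩ := hs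
      have : s < Δ κ := by
        rcases lt_max_iff.mp h2 with h | h
        · exact h
        · linarith
      simp [hg, if_pos this]
    have hG_Ioc : IntegrableOn (fun s => α * g s * Real.exp (-β * g s * (s - A))) (Set.Ioc A M) :=
      hGint.mono Set.Ioc_subset_Ioi_self le_rfl
    have hF_Ioc : IntegrableOn (fun s => α * f s * Real.exp (-β * f s * (s - A))) (Set.Ioc A M) := by
      rw [IntegrableOn, Measure.restrict_congr_set MeasureTheory.Ioo_ae_eq_Ioc.symm]
      exact ((hG_Ioc.mono Set.Ioo_subset_Ioc_self le_rfl).congr_fun hfgIoo measurableSet_Ioo)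
    have hsplit : Set.Ioc A M ∪ Set.Ioi M = Set.Ioi A := Set.Ioc_union_Ioi_eq_Ioi hAM
    have hFint : IntegrableOn (fun s => α * f s * Real.exp (-β * f s * (s - A))) (Set.Ioi A) := by
      rw [← hsplit]
      exact hF_Ioc.union hF_Ioi
    refine ⟨hFint, ?_⟩
    have hFsplit : (∫ s in Set.Ioi A, α * f s * Real.exp (-β * f s * (s - A)))
        = (∫ s in Set.Ioc A M, α * f s * Real.exp (-β * f s * (s - A)))
          + ∫ s in Set.Ioi M, α * f s * Real.exp (-β * f s * (s - A)) := by
      rw [← hsplit]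
      exact setIntegral_union (Set.Ioc_disjoint_Ioi le_rfl) measurableSet_Ioi hF_Ioc hF_Ioi
    have hGsplit : (∫ s in Set.Ioi A, α * g s * Real.exp (-β * g s * (s - A)))
        = (∫ s in Set.Ioc A M, α * g s * Real.exp (-β * g s * (s - A)))
          + ∫ s in Set.Ioi M, α * g s * Real.exp (-β * g s * (s - A)) := by
      rw [← hsplit]
      exact setIntegral_union (Set.Ioc_disjoint_Ioi le_rfl) measurableSet_Ioi hG_Ioc hG_Ioi
    have hIocEq : (∫ s in Set.Ioc A M, α * f s * Real.exp (-β * f s * (s - A)))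
        = ∫ s in Set.Ioc A M, α * g s * Real.exp (-β * g s * (s - A)) := by
      rw [integral_Ioc_eq_integral_Ioo, integral_Ioc_eq_integral_Ioo]
      exact (setIntegral_congr_fun measurableSet_Ioo hfgIoo).symm
    have hFtail : (∫ s in Set.Ioi M, α * f s * Real.exp (-β * f s * (s - A)))
        = α / β * Real.exp (-β * fv (κ + 1) * (M - A)) := by
      rw [← setIntegral_congr_fun measurableSet_Ioi hfM, hFtail_val]
    have hGtail : (∫ s in Set.Ioi M, α * g s * Real.exp (-β * g s * (s - A)))
        = α / β * Real.exp (-β * fv κ * (M - A)) := by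
      rw [← setIntegral_congr_fun measurableSet_Ioi hgM, hGtail_val]
    have hsum : Finset.Icc 1 (κ + 1 - 1) = insert κ (Finset.Icc 1 (κ - 1)) := by
      ext x
      simp only [Finset.mem_Icc, Finset.mem_insert]
      omega
    have hnotmem : κ ∉ Finset.Icc 1 (κ - 1) := by
      simp only [Finset.mem_Icc]
      omega
    rw [hFsplit, hIocEq, hFtail]
    have : (∫ s in Set.Ioc A M, α * g s * Real.exp (-β * g s * (s - A)))
        = (∫ s in Set.Ioi A, α * g s * Real.exp (-β * g s * (s - A)))
          - α / β * Real.exp (-β * fv κ * (M - A)) := by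
      rw [hGsplit, hGtail]; ring
    rw [this, hGval, hsum, Finset.sum_insert hnotmem]
    simp only [Nat.add_sub_cancel]
    rw [hMA]
    ring

theorem piecewise_concurrency_compensator_closed_form
    (α β A : ℝ) (hα : 0 < α) (hβ : 0 < β) (hA : 0 ≤ A)
    (κ : ℕ) (hκ : 1 ≤ κ) (Δ : ℕ → ℝ)
    (hΔ0 : Δ 0 = 0)
    (hΔmono : ∀ l, l + 1 < κ → Δ l < Δ (l + 1))
    (fv : ℕ → ℝ) (hfv : ∀ l, 1 ≤ l → l ≤ κ → 0 < fv l)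
    (f : ℝ → ℝ)
    (hf1 : ∀ l, 1 ≤ l → l < κ → ∀ s, Δ (l - 1) ≤ s → s < Δ l → f s = fv l)
    (hf2 : ∀ s, Δ (κ - 1) ≤ s → f s = fv κ) :
    IntegrableOn (fun s => α * f s * Real.exp (-β * f s * (s - A))) (Set.Ioi A)
    ∧ (∫ s in Set.Ioi A, α * f s * Real.exp (-β * f s * (s - A)))
      = α / β * ((∑ l ∈ Finset.Icc 1 (κ - 1),
          (Real.exp (-β * fv l * max (Δ (l - 1) - A) 0) - Real.exp (-β * fv l * max (Δ l - A) 0)))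
        + Real.exp (-β * fv κ * max (Δ (κ - 1) - A) 0)) :=
  compensator_aux α β A hα hβ hA κ hκ Δ hΔ0 hΔmono fv hfv f hf1 hf2
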